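/- Under the separable least-squares model assumptions with A(x) of full column rank for every x ∈ Ω and σ̃ := min_{x∈Ω} σ_min(A(x)) > 0, define ŷ(x) = A(x)⁺ z, where A(x)⁺ = (A(x)ᵀA(x))⁻¹A(x)ᵀ is the Moore–Penrose pseudo-inverse. Then for every x ∈ Ω: (i) ‖ŷ(x) − y*‖ ≤ (σ₁/σ̃)·‖x − x*‖·‖y*‖ + (1/σ̃)·‖w‖, and (ii) ‖ŷ(x) − ŷ(x*)‖ ≤ (σ₁/σ̃)·‖x − x*‖·‖y*‖ + (2/σ̃)·‖w‖. -/

import Mathlib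

/-!
STATEMENT 9: Perturbation bounds for the variable-projection optimal linear coefficients
`ŷ(x) = A(x)⁺ z`.

The dictionary is a map into continuous linear maps between Euclidean spaces (operator norm
= spectral norm); `A(x)⁺ = (A(x)ᵀA(x))⁻¹A(x)ᵀ` is realised via the adjoint and
`ContinuousLinearMap.inverse` of the Gram map.  `σ̃ ≤ σ_min(A(x))` is expressed by the
equivalent lower bound `σ̃‖v‖ ≤ ‖A(x)v‖` for all `v`.
-/

noncomputable section

abbrev EucSp (n : ℕ) : Type := EuclideanSpace ℝ (Fin n)

/-- The Moore–Penrose pseudo-inverse `A(x)⁺ = (A(x)ᵀA(x))⁻¹A(x)ᵀ` of a full-column-rank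
dictionary. -/
def pinv {p d N : ℕ} (A : EucSp p → (EucSp d →L[ℝ] EucSp N)) (x : EucSp p) :
    EucSp N →L[ℝ] EucSp d :=
  (ContinuousLinearMap.adjoint (A x) ∘L A x).inverse ∘L ContinuousLinearMap.adjoint (A x)

open ContinuousLinearMap in
lemma gram_equiv {d N : ℕ} (B : EucSp d →L[ℝ] EucSp N) (hB : Function.Injective B) :
    ∃ e : EucSp d ≃L[ℝ] EucSp d, (e : EucSp d →L[ℝ] EucSp d) = adjoint B ∘L B := by
  set G := adjoint B ∘L B with hG
  have key : ∀ v, G v = 0 → v = 0 := by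
    intro v h0
    have h1 : (inner ℝ (B v) (B v)) = 0 := by
      rw [← ContinuousLinearMap.adjoint_inner_left]
      show (inner ℝ (G v) v) = 0
      simp [h0]
    have h2 : B v = 0 := inner_self_eq_zero.mp h1
    have : B v = B 0 := by simpa using h2
    exact hB this
  have hinj : Function.Injective (G.toLinearMap) := by
    rw [← LinearMap.ker_eq_bot, LinearMap.ker_eq_bot']
    intro v hv
    exact key v hv
  have hsurj : Function.Surjective (G.toLinearMap) :=
    (LinearMap.injective_iff_surjective).mp hinj
  let e₀ : EucSp d ≃ₗ[ℝ] EucSp d := LinearEquiv.ofBijective G.toLinearMap ⟨hinj, hsurj⟩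
  refine ⟨e₀.toContinuousLinearEquiv, ?_⟩
  ext v
  rfl

open ContinuousLinearMap in
lemma pinv_comp {d N : ℕ} {p : ℕ} (A : EucSp p → (EucSp d →L[ℝ] EucSp N)) (x : EucSp p)
    (hB : Function.Injective (A x)) (y : EucSp d) :
    pinv A x (A x y) = y := by
  obtain ⟨e, he⟩ := gram_equiv (A x) hB
  have : pinv A x (A x y) = (adjoint (A x) ∘L A x).inverse ((adjoint (A x) ∘L A x) y) := rfl
  rw [this, ← he, inverse_equiv]
  exact e.symm_apply_apply y

open ContinuousLinearMap in
lemma pinv_norm_le {d N : ℕ} {p : ℕ} (A : EucSp p → (EucSp d →L[ℝ] EucSp N)) (x : EucSp p)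
    {σmin : ℝ} (hσmin : 0 < σmin) (hσ : ∀ v : EucSp d, σmin * ‖v‖ ≤ ‖A x v‖)
    (u : EucSp N) : ‖pinv A x u‖ ≤ ‖u‖ / σmin := by
  have hB : Function.Injective (A x) := by
    intro v v' h
    have : σmin * ‖v - v'‖ ≤ ‖A x (v - v')‖ := hσ _
    rw [map_sub, h, sub_self, norm_zero] at this
    have : ‖v - v'‖ ≤ 0 := nonpos_of_mul_nonpos_right (by linarith) hσmin
    have := le_antisymm this (norm_nonneg _)
    exact sub_eq_zero.mp (norm_eq_zero.mp this)
  obtain ⟨e, he⟩ := gram_equiv (A x) hB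
  set y := pinv A x u with hy
  have hGy : (adjoint (A x) ∘L A x) y = adjoint (A x) u := by
    have : y = e.symm (adjoint (A x) u) := by
      rw [hy]
      show (adjoint (A x) ∘L A x).inverse (adjoint (A x) u) = _
      rw [← he, inverse_equiv]; rfl
    rw [this, ← he]
    exact e.apply_symm_apply _
  have h1 : ‖A x y‖ ^ 2 = (inner ℝ u (A x y)) := by
    have : (inner ℝ (A x y) (A x y)) = (inner ℝ ((adjoint (A x) ∘L A x) y) y) := by
      rw [ContinuousLinearMap.comp_apply, ContinuousLinearMap.adjoint_inner_left]
    rw [← real_inner_self_eq_norm_sq, this, hGy, ContinuousLinearMap.adjoint_inner_left]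
  have h2 : ‖A x y‖ ^ 2 ≤ ‖u‖ * ‖A x y‖ := by
    rw [h1]; exact real_inner_le_norm _ _
  have h3 : ‖A x y‖ ≤ ‖u‖ := by
    rcases eq_or_lt_of_le (norm_nonneg (A x y)) with h | h
    · rw [← h]; exact norm_nonneg u
    · nlinarith
  have h4 : σmin * ‖y‖ ≤ ‖u‖ := le_trans (hσ y) h3
  rw [div_eq_inv_mul]
  calc ‖y‖ = σmin⁻¹ * (σmin * ‖y‖) := by field_simp
  _ ≤ σmin⁻¹ * ‖u‖ := by
      apply mul_le_mul_of_nonneg_left h4 (by positivity)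

/-- **Stability of the optimal linear coefficients.**
(i) `‖ŷ(x) − y*‖ ≤ (σ₁/σ̃)‖x − x*‖‖y*‖ + (1/σ̃)‖w‖`, and
(ii) `‖ŷ(x) − ŷ(x*)‖ ≤ (σ₁/σ̃)‖x − x*‖‖y*‖ + (2/σ̃)‖w‖`. -/
theorem pinv_coefficient_stability
    {p d N : ℕ}
    (Ω : Set (EucSp p)) (hΩconv : Convex ℝ Ω) (hΩcomp : IsCompact Ω)
    (A : EucSp p → (EucSp d →L[ℝ] EucSp N)) (hA : ContDiff ℝ 3 A)
    (σ1 : ℝ) (hσ1 : ∀ x ∈ Ω, ‖iteratedFDeriv ℝ 1 A x‖ ≤ σ1)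
    -- full column rank and uniform lower singular-value bound σ̃ > 0
    (hrank : ∀ x ∈ Ω, Function.Injective (A x))
    (σmin : ℝ) (hσmin : 0 < σmin)
    (hσminA : ∀ x ∈ Ω, ∀ v : EucSp d, σmin * ‖v‖ ≤ ‖A x v‖)
    (xs : EucSp p) (hxs : xs ∈ Ω) (ys : EucSp d) (w : EucSp N) :
    ∀ x ∈ Ω,
      ‖pinv A x (A xs ys + w) - ys‖
          ≤ σ1 / σmin * ‖x - xs‖ * ‖ys‖ + (1 / σmin) * ‖w‖ ∧
      ‖pinv A x (A xs ys + w) - pinv A xs (A xs ys + w)‖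
          ≤ σ1 / σmin * ‖x - xs‖ * ‖ys‖ + (2 / σmin) * ‖w‖ := by
  -- Lipschitz bound on A over Ω
  have hLip : ∀ x ∈ Ω, ‖A xs - A x‖ ≤ σ1 * ‖x - xs‖ := by
    intro x hx
    have hdiff : ∀ y ∈ Ω, DifferentiableAt ℝ A y := fun y _ =>
      (hA.differentiable (by norm_num)).differentiableAt
    have hbound : ∀ y ∈ Ω, ‖fderiv ℝ A y‖ ≤ σ1 := by
      intro y hy
      calc ‖fderiv ℝ A y‖ = ‖iteratedFDeriv ℝ 0 (fderiv ℝ A) y‖ :=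
            by rw [norm_iteratedFDeriv_zero]
        _ = ‖iteratedFDeriv ℝ 1 A y‖ := norm_iteratedFDeriv_fderiv
        _ ≤ σ1 := hσ1 y hy
    have := hΩconv.norm_image_sub_le_of_norm_fderiv_le hdiff hbound hx hxs
    simpa [norm_sub_rev] using this
  -- main bound (i) as a general claim
  have main : ∀ x ∈ Ω, ‖pinv A x (A xs ys + w) - ys‖
      ≤ σ1 / σmin * ‖x - xs‖ * ‖ys‖ + (1 / σmin) * ‖w‖ := by
    intro x hx
    have hrw : pinv A x (A xs ys + w) - ys
        = pinv A x ((A xs - A x) ys + w) := by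
      have h1 : pinv A x (A x ys) = ys := pinv_comp A x (hrank x hx) ys
      have : (A xs) ys + w = (A x) ys + ((A xs - A x) ys + w) := by
        simp [ContinuousLinearMap.sub_apply]; abel
      rw [this, map_add, h1]; abel
    rw [hrw]
    calc ‖pinv A x ((A xs - A x) ys + w)‖
        ≤ ‖(A xs - A x) ys + w‖ / σmin :=
          pinv_norm_le A x hσmin (hσminA x hx) _
      _ ≤ (‖(A xs - A x) ys‖ + ‖w‖) / σmin := by
          gcongr
          exact norm_add_le _ _
      _ ≤ (σ1 * ‖x - xs‖ * ‖ys‖ + ‖w‖) / σmin := by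
          gcongr ?_ / _
          have : ‖(A xs - A x) ys‖ ≤ ‖A xs - A x‖ * ‖ys‖ :=
            (A xs - A x).le_opNorm ys
          have h2 : ‖A xs - A x‖ * ‖ys‖ ≤ σ1 * ‖x - xs‖ * ‖ys‖ :=
            mul_le_mul_of_nonneg_right (hLip x hx) (norm_nonneg _)
          linarith
      _ = σ1 / σmin * ‖x - xs‖ * ‖ys‖ + (1 / σmin) * ‖w‖ := by ring
  intro x hx
  refine ⟨main x hx, ?_⟩
  have h1 := main x hx
  have h2 := main xs hxs
  rw [sub_self, norm_zero] at h2
  calc ‖pinv A x (A xs ys + w) - pinv A xs (A xs ys + w)‖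
      ≤ ‖pinv A x (A xs ys + w) - ys‖ + ‖pinv A xs (A xs ys + w) - ys‖ := by
        rw [← norm_neg (pinv A xs (A xs ys + w) - ys)]
        simpa using norm_add_le (pinv A x (A xs ys + w) - ys) (-(pinv A xs (A xs ys + w) - ys))
    _ ≤ σ1 / σmin * ‖x - xs‖ * ‖ys‖ + (1 / σmin) * ‖w‖
        + (σ1 / σmin * 0 * ‖ys‖ + (1 / σmin) * ‖w‖) := by
        exact add_le_add h1 (by simpa using h2)
    _ = σ1 / σmin * ‖x - xs‖ * ‖ys‖ + (2 / σmin) * ‖w‖ := by ring
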